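/- Let R be a commutative ring in which 2 is invertible. There exists a subset A of SL₂(R) such that the induced subgraph of the regular graph Γ (vertices SL₂(R), x ~ y iff det(x+y) = 0 and x ≠ y) on A is isomorphic to the hyperbola graph H(R) = Cay(R², {(x,y) : xy = 1}). -/

import Mathlib

/-- The regular graph on `SL_n(R)`: distinct `x, y` are adjacent iff `det(x+y) = 0`. -/
def regGraph (n : ℕ) (R : Type) [CommRing R] :
    SimpleGraph (Matrix.SpecialLinearGroup (Fin n) R) where
  Adj x y := x ≠ y ∧ ((x : Matrix (Fin n) (Fin n) R) + y).det = 0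
  symm := by
    constructor
    rintro x y ⟨h1, h2⟩
    exact ⟨h1.symm, by rwa [add_comm]⟩
  loopless := ⟨fun x h => h.1 rfl⟩

/-- The hyperbola graph `H(R) = Cay(R², {(x,y) : xy = 1})`:
`v ~ w` iff `v ≠ w` and `(w₁-v₁)(w₂-v₂) = 1`. -/
def hgraph (R : Type) [CommRing R] : SimpleGraph (R × R) :=
  SimpleGraph.fromRel (fun v w => (w.1 - v.1) * (w.2 - v.2) = 1)

/-- The matrix `a_{x,y}`. -/
def amat {R : Type} [CommRing R] (v : R × R) :
    Matrix.SpecialLinearGroup (Fin 2) R :=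
  ⟨!![1 - 4 * v.1 * v.2, -(2 * v.1); 2 * v.2, 1], by
    simp [Matrix.det_fin_two_of]; ring⟩

lemma amat_inj {R : Type} [CommRing R] (h2 : IsUnit (2 : R)) :
    Function.Injective (amat (R := R)) := by
  rintro ⟨x1, y1⟩ ⟨x2, y2⟩ h
  have h01 := congrArg (fun m : Matrix.SpecialLinearGroup (Fin 2) R =>
    (m : Matrix (Fin 2) (Fin 2) R) 0 1) h
  have h10 := congrArg (fun m : Matrix.SpecialLinearGroup (Fin 2) R =>
    (m : Matrix (Fin 2) (Fin 2) R) 1 0) h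
  simp [amat] at h01 h10
  have hx : x1 = x2 := h2.mul_left_cancel h01
  have hy : y1 = y2 := h2.mul_left_cancel h10
  simp [hx, hy]

lemma amat_det {R : Type} [CommRing R] (v w : R × R) :
    ((amat v : Matrix (Fin 2) (Fin 2) R) + amat w).det
      = 4 - 4 * ((w.1 - v.1) * (w.2 - v.2)) := by
  simp [amat, Matrix.det_fin_two, Matrix.add_apply]
  ring

theorem hyperbola_embeds_in_regular_graph {R : Type} [CommRing R]
    (h2 : IsUnit (2 : R)) :
    ∃ A : Set (Matrix.SpecialLinearGroup (Fin 2) R),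
      Nonempty (hgraph R ≃g (regGraph 2 R).induce A) := by
  have h4 : IsUnit (4 : R) := by
    have := h2.mul h2; rwa [show (2 : R) * 2 = 4 by norm_num] at this
  refine ⟨Set.range (amat (R := R)), ⟨⟨Equiv.ofInjective _ (amat_inj h2), ?_⟩⟩⟩
  intro v w
  have key : ((amat v : Matrix (Fin 2) (Fin 2) R) + amat w).det = 0 ↔
      (w.1 - v.1) * (w.2 - v.2) = 1 := by
    rw [amat_det]
    constructor
    · intro h
      have : (4 : R) * ((w.1 - v.1) * (w.2 - v.2) - 1) = 0 := by linear_combination -h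
      have h0 := (h4.mul_right_eq_zero).mp this
      linear_combination h0
    · intro h; rw [h]; ring
  constructor
  · rintro ⟨hne, hdet⟩
    have hne' : v ≠ w := fun h => hne (by simp [h])
    exact ⟨hne', Or.inl (key.mp hdet)⟩
  · rintro ⟨hne, h1⟩
    refine ⟨fun h => hne ?_, key.mpr ?_⟩
    · exact amat_inj h2 (by simpa using h)
    · rcases h1 with h | h
      · exact h
      · linear_combination h
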